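/- Let V be a finite-dimensional real Hilbert space with A symmetric positive definite, and K : V → V self-adjoint in the A-inner product with spectrum in [0,1]. Then for every u ∈ V and every positive integer m, A((I − K) K^{2m} u, u) ≤ (1/(2m)) · A((I − K^{2m}) u, u). -/

import Mathlib

open RealInnerProductSpace Polynomial

/-- Type synonym for equipping `V` with the `A`-inner product. -/
def SmoothingAvgSyn (V : Type*) : Type _ := V

/-- PSD of a symmetric endomorphism whose eigenvalues are nonnegative. -/
lemma smoothing_avg_aux_psd {W : Type*} [NormedAddCommGroup W] [InnerProductSpace ℝ W]
    [FiniteDimensional ℝ W] (T : Module.End ℝ W) (hT : T.IsSymmetric)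
    (hs : ∀ μ : ℝ, (∃ x : W, x ≠ 0 ∧ T x = μ • x) → 0 ≤ μ) (x : W) :
    0 ≤ ⟪T x, x⟫ := by
  have hn : Module.finrank ℝ W = Module.finrank ℝ W := rfl
  set b := hT.eigenvectorBasis hn with hbdef
  have key : (∑ i, ⟪T x, b i⟫ * ⟪b i, x⟫) = ⟪T x, x⟫ :=
    OrthonormalBasis.sum_inner_mul_inner b (T x) x
  rw [← key]
  refine Finset.sum_nonneg fun i _ => ?_
  have happly : T (b i) = hT.eigenvalues hn i • b i := by
    have := hT.apply_eigenvectorBasis hn i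
    exact_mod_cast this
  have hlam : 0 ≤ hT.eigenvalues hn i := by
    refine hs _ ⟨b i, ?_, happly⟩
    simpa using b.toBasis.ne_zero i
  have h1 : ⟪T x, b i⟫ = hT.eigenvalues hn i * ⟪x, b i⟫ := by
    rw [hT x (b i), happly, real_inner_smul_right]
  rw [h1, real_inner_comm (b i) x, mul_assoc]
  exact mul_nonneg hlam (mul_self_nonneg _)

lemma smoothing_avg_K_psd {V : Type*} [NormedAddCommGroup V] [InnerProductSpace ℝ V]
    [FiniteDimensional ℝ V] (A : V →ₗ[ℝ] V)
    (hAsym : ∀ x y : V, ⟪A x, y⟫ = ⟪x, A y⟫)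
    (hApos : ∀ x : V, x ≠ 0 → 0 < ⟪A x, x⟫)
    (K : Module.End ℝ V)
    (hKsym : ∀ x y : V, ⟪A (K x), y⟫ = ⟪A x, K y⟫)
    (hKspec : spectrum ℝ K ⊆ Set.Icc (0 : ℝ) 1) (y : V) :
    0 ≤ ⟪A (K y), y⟫ := by
  have hA0 : ∀ x : V, 0 ≤ ⟪A x, x⟫ := by
    intro x
    rcases eq_or_ne x 0 with rfl | h
    · simp
    · exact (hApos x h).le
  letI : AddCommGroup (SmoothingAvgSyn V) := inferInstanceAs (AddCommGroup V)
  letI : Module ℝ (SmoothingAvgSyn V) := inferInstanceAs (Module ℝ V)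
  let core : InnerProductSpace.Core ℝ (SmoothingAvgSyn V) :=
    { inner := fun a b => ⟪A a, b⟫
      conj_inner_symm := fun a b => by
        simp only [starRingEnd_apply, star_trivial]
        exact (hAsym b a).trans (real_inner_comm _ _)
      re_inner_nonneg := fun a => by simpa using hA0 a
      definite := fun a ha => by
        by_contra h
        exact (hApos a h).ne' (by simpa using ha)
      add_left := fun a b c => by
        show ⟪A (a + b), c⟫ = ⟪A a, c⟫ + ⟪A b, c⟫
        exact (congrArg (fun z : V => ⟪z, (c : V)⟫) (map_add A (a : V) b)).trans (inner_add_left _ _ _)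
      smul_left := fun a b r => by
        show ⟪A (r • a), b⟫ = r * ⟪A a, b⟫
        exact (congrArg (fun z : V => ⟪z, (b : V)⟫) (map_smul A r (a : V))).trans (real_inner_smul_left _ _ _) }
  letI : NormedAddCommGroup (SmoothingAvgSyn V) := core.toNormedAddCommGroup
  letI : InnerProductSpace ℝ (SmoothingAvgSyn V) := InnerProductSpace.ofCore core.toCore
  haveI : FiniteDimensional ℝ (SmoothingAvgSyn V) := inferInstanceAs (FiniteDimensional ℝ V)
  let K' : Module.End ℝ (SmoothingAvgSyn V) := K
  have hT : K'.IsSymmetric := fun a b => hKsym a b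
  have hs : ∀ μ : ℝ, (∃ x : SmoothingAvgSyn V, x ≠ 0 ∧ K' x = μ • x) → 0 ≤ μ := by
    rintro μ ⟨x, hx0, hx⟩
    have hev : Module.End.HasEigenvalue K μ :=
      Module.End.hasEigenvalue_of_hasEigenvector
        ⟨Module.End.mem_eigenspace_iff.mpr hx, hx0⟩
    exact (hKspec hev.mem_spectrum).1
  exact smoothing_avg_aux_psd K' hT hs y

/-- Averaging/telescoping inequality:
`A((I−K)K^{2m}u, u) ≤ (1/(2m)) A((I−K^{2m})u, u)`. -/
theorem smoothing_averaging
    {V : Type*} [NormedAddCommGroup V] [InnerProductSpace ℝ V] [FiniteDimensional ℝ V]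
    (A : V →ₗ[ℝ] V)
    (hAsym : ∀ x y : V, ⟪A x, y⟫ = ⟪x, A y⟫)
    (hApos : ∀ x : V, x ≠ 0 → 0 < ⟪A x, x⟫)
    (K : Module.End ℝ V)
    (hKsym : ∀ x y : V, ⟪A (K x), y⟫ = ⟪A x, K y⟫)
    (hKspec : spectrum ℝ K ⊆ Set.Icc (0 : ℝ) 1)
    (u : V) (m : ℕ) (hm : 1 ≤ m) :
    ⟪A ((1 - K) ((K ^ (2 * m)) u)), u⟫ ≤
      (1 / (2 * (m : ℝ))) * ⟪A ((1 - K ^ (2 * m)) u), u⟫ := by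
  have hA0 : ∀ x : V, 0 ≤ ⟪A x, x⟫ := by
    intro x
    rcases eq_or_ne x 0 with rfl | h
    · simp
    · exact (hApos x h).le
  have hAK := smoothing_avg_K_psd A hAsym hApos K hKsym hKspec
  set φ : ℝ[X] →ₐ[ℝ] Module.End ℝ V := Polynomial.aeval K with hφ
  -- symmetry of polynomials in K w.r.t. the A-inner product
  have hpow : ∀ (n : ℕ) (x y : V), ⟪A ((K ^ n) x), y⟫ = ⟪A x, (K ^ n) y⟫ := by
    intro n
    induction n with
    | zero => intro x y; simp
    | succ n ih =>
      intro x y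
      have h1 : (K ^ (n + 1)) x = (K ^ n) (K x) := by rw [pow_succ, Module.End.mul_apply]
      have h2 : (K ^ (n + 1)) y = K ((K ^ n) y) := by rw [pow_succ', Module.End.mul_apply]
      calc ⟪A ((K ^ (n + 1)) x), y⟫ = ⟪A ((K ^ n) (K x)), y⟫ := by rw [h1]
        _ = ⟪A (K x), (K ^ n) y⟫ := ih (K x) y
        _ = ⟪A x, K ((K ^ n) y)⟫ := hKsym x _
        _ = ⟪A x, (K ^ (n + 1)) y⟫ := by rw [h2]
  have hsymφ : ∀ (q : ℝ[X]) (x y : V), ⟪A ((φ q) x), y⟫ = ⟪A x, (φ q) y⟫ := by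
    intro q
    induction q using Polynomial.induction_on' with
    | add p q hp hq =>
      intro x y
      simp only [map_add, LinearMap.add_apply, map_add, inner_add_left, inner_add_right,
        hp, hq]
    | monomial n a =>
      intro x y
      simp only [hφ, Polynomial.aeval_monomial]
      rw [Module.End.mul_apply, Module.End.mul_apply]
      have halg : ∀ z : V, (algebraMap ℝ (Module.End ℝ V) a) z = a • z := fun z => rfl
      rw [halg, halg, map_smul, inner_smul_left, inner_smul_right, RCLike.conj_to_real,
        hpow n x y]
  set g : ℕ → ℝ := fun i => ⟪A ((φ ((1 - X) * X ^ i)) u), u⟫ with hg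
  -- monotonicity
  have hmono : ∀ i, g (i + 1) ≤ g i := by
    intro i
    rw [← sub_nonneg]
    have hsub : g i - g (i + 1) = ⟪A ((φ ((1 - X) * X ^ i - (1 - X) * X ^ (i + 1))) u), u⟫ := by
      rw [hg]
      simp only [map_sub, LinearMap.sub_apply, inner_sub_left]
    rw [hsub]
    rcases Nat.even_or_odd i with ⟨j, hj⟩ | ⟨j, hj⟩
    · have hq : (1 - X) * X ^ i - (1 - X) * X ^ (i + 1)
          = ((1 - X) * X ^ j) * ((1 - X) * X ^ j : ℝ[X]) := by subst hj; ring
      rw [hq, map_mul, Module.End.mul_apply, hsymφ]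
      exact hA0 _
    · set q : ℝ[X] := (1 - X) * X ^ j with hqdef
      have hX : φ X = K := Polynomial.aeval_X K
      have hq : (1 - X) * X ^ i - (1 - X) * X ^ (i + 1) = q * (X * q) := by
        rw [hqdef]; subst hj; ring
      rw [hq, map_mul φ q (X * q), map_mul φ X q, hX, Module.End.mul_apply, hsymφ q,
        Module.End.mul_apply]
      exact hAK _
  have hanti : ∀ i j, i ≤ j → g j ≤ g i := fun i j h =>
    antitone_nat_of_succ_le hmono h
  set N := 2 * m with hN
  -- telescoping
  have hgeom : (∑ i ∈ Finset.range N, (1 - X) * X ^ i) = 1 - (X : ℝ[X]) ^ N := by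
    have h := geom_sum_mul (X : ℝ[X]) N
    rw [← Finset.mul_sum]
    linear_combination -h
  have hsum : ∑ i ∈ Finset.range N, g i = ⟪A ((1 - K ^ N) u), u⟫ := by
    have h1 : ∑ i ∈ Finset.range N, g i
        = ⟪A ((φ (∑ i ∈ Finset.range N, (1 - X) * X ^ i)) u), u⟫ := by
      rw [map_sum, LinearMap.sum_apply, map_sum, sum_inner]
    rw [h1, hgeom, map_sub, map_one, map_pow, Polynomial.aeval_X]
  -- averaging
  have hNpos : (0 : ℝ) < (N : ℝ) := by
    have : 0 < N := by omega
    exact_mod_cast this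
  have havg : (N : ℝ) * g N ≤ ∑ i ∈ Finset.range N, g i := by
    calc (N : ℝ) * g N = ∑ _i ∈ Finset.range N, g N := by
          rw [Finset.sum_const, Finset.card_range, nsmul_eq_mul]
      _ ≤ ∑ i ∈ Finset.range N, g i :=
          Finset.sum_le_sum fun i hi => hanti i N (Finset.mem_range.mp hi).le
  have hgoal : g N ≤ (1 / (N : ℝ)) * ⟪A ((1 - K ^ N) u), u⟫ := by
    rw [one_div, ← div_eq_inv_mul, le_div_iff₀ hNpos, mul_comm]
    rw [← hsum]
    exact havg
  have hgN : g N = ⟪A ((1 - K) ((K ^ N) u)), u⟫ := by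
    simp only [hg]
    have : φ ((1 - X) * X ^ N) = (1 - K) * K ^ N := by
      rw [map_mul, map_sub, map_one, Polynomial.aeval_X, map_pow, Polynomial.aeval_X]
    rw [this, Module.End.mul_apply]
  have hcast : ((N : ℕ) : ℝ) = 2 * (m : ℝ) := by rw [hN]; push_cast; ring
  rw [← hgN, ← hcast]
  exact hgoal
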